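/- Let G be a Polish group with a compatible metric and X a Polish G-space with a compatible metric. For each n ∈ ℕ let H_n be a Polish group with a compatible metric acting continuously on a Polish metric space X_n; let i_n^{n+1} : H_n → H_{n+1} be continuous group homomorphisms and f_n^{n+1} : X_n → X_{n+1} continuous injective maps satisfying f_n^{n+1}(h·x) = i_n^{n+1}(h)·f_n^{n+1}(x) for all h ∈ H_n, x ∈ X_n; write i_j^n and f_j^n for the compositions (with i_j^j, f_j^j the identities). Suppose there are continuous group homomorphisms ı_n : H_n → G with ı_{n+1} ∘ i_n^{n+1} = ı_n and with ∪_n ı_n[H_n] dense in G, and continuous maps φ_n : X_n → X with φ_{n+1} ∘ f_n^{n+1} = φ_n, φ_n(h·x) = ı_n(h)·φ_n(x) for all h ∈ H_n, x ∈ X_n, and with ∪_n φ_n[X_n] dense in X. Let y ∈ X₀ be such that the orbit H_n·f_0^n(y) is dense in X_n for every n, and let J ∈ ℕ. Assume: for every ε > 0, every j ≥ J and every g ∈ H_j there exists a sequence (α_n)_{n≥j} of positive reals such that (1) for every n ≥ j the set {h·(i_j^n(g)·f_0^n(y)) : h ∈ H_n, d_{H_n}(h,1) < mod(ı_n,1,ε)}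 is dense in the open ball B_{X_n}(i_j^n(g)·f_0^n(y), α_n), and (2) inf{comod(φ_n, i_j^n(g)·f_0^n(y), α_n) : n ≥ j} > 0. Then the orbit G·φ₀(y) is comeager in X. -/

import Mathlib

noncomputable section

/-- The set of radii `δ > 0` witnessing the modulus of continuity of `f` at `x` for `ε`:
`mod(f,x,ε) = sup {δ > 0 : f[B(x,δ)] ⊆ B(f x, ε)}` is the supremum of this set.
(The set is downward closed, so `r < mod(f,x,ε)` iff `∃ δ ∈ modSet f x ε, r < δ`.) -/
def modSet {X Y : Type*} [MetricSpace X] [MetricSpace Y] (f : X → Y) (x : X) (ε : ℝ) :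
    Set ℝ :=
  {δ : ℝ | 0 < δ ∧ f '' Metric.ball x δ ⊆ Metric.ball (f x) ε}

/-- The set of radii `δ > 0` witnessing the co-modulus of `f` at `x` for `ε`:
`comod(f,x,ε) = sup {δ > 0 : B(f x, δ) ∩ f[X] ⊆ f[B(x,ε)]}` is the supremum of this set.
(The set is downward closed, so `comod(f,x,ε) ≥ c > 0` iff `∃ δ ∈ comodSet f x ε, c/2 ≤ δ`,
up to rescaling the positive constant `c`.) -/
def comodSet {X Y : Type*} [MetricSpace X] [MetricSpace Y] (f : X → Y) (x : X) (ε : ℝ) :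
    Set ℝ :=
  {δ : ℝ | 0 < δ ∧ Metric.ball (f x) δ ∩ Set.range f ⊆ f '' Metric.ball x ε}

/-- The composite map `X₀ → Xₙ` along a chain of maps `Xₙ → Xₙ₊₁`. -/
def f0Comp {T : ℕ → Type*} (s : ∀ n, T n → T (n + 1)) : (n : ℕ) → T 0 → T n
  | 0 => id
  | n + 1 => fun a => s n (f0Comp s n a)

/-- The composite map `X_j → X_{j+k}` along a chain of maps `Xₙ → Xₙ₊₁`. -/
def chainComp {T : ℕ → Type*} (s : ∀ n, T n → T (n + 1)) (j : ℕ) : (k : ℕ) → T j → T (j + k)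
  | 0 => id
  | k + 1 => fun a => s (j + k) (chainComp s j k a)

open Set Filter in
theorem exists_residual_chain' {Y : Type*} [MetricSpace Y] {Γ : Type*}
    (bl : Γ → Set Y) (hopen : ∀ t, IsOpen (bl t))
    (Good : ℕ → Γ → Prop) (R : ℕ → Γ → Γ → Prop)
    (init : ∀ (p : Y) (r : ℝ), 0 < r → ∃ t, Good 0 t ∧ (bl t).Nonempty ∧ bl t ⊆ Metric.ball p r)
    (ext : ∀ (m : ℕ) (t : Γ), Good m t → ∀ p ∈ bl t, ∀ r : ℝ, 0 < r →
      ∃ t', Good (m + 1) t' ∧ (bl t').Nonempty ∧ bl t' ⊆ Metric.ball p r ∩ bl t ∧ R m t t') :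
    ∃ E : Set Y, E ∈ residual Y ∧ ∀ x ∈ E, ∃ tt : ℕ → Γ,
      (∀ m, Good m (tt m)) ∧ (∀ m, x ∈ bl (tt m)) ∧ ∀ m, R m (tt m) (tt (m + 1)) := by
  classical
  have maxDisj : ∀ C : Set Γ, ∃ A, A ⊆ C ∧ A.PairwiseDisjoint bl ∧
      ∀ b ∈ C, (∀ a ∈ A, Disjoint (bl b) (bl a)) → b ∈ A := by
    intro C
    have hzorn : ∀ c ⊆ {A : Set Γ | A ⊆ C ∧ A.PairwiseDisjoint bl},
        IsChain (· ⊆ ·) c → ∃ ub ∈ {A : Set Γ | A ⊆ C ∧ A.PairwiseDisjoint bl},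
          ∀ s ∈ c, s ⊆ ub := by
      intro c hc hchain
      refine ⟨⋃₀ c, ⟨sUnion_subset fun s hs => (hc hs).1, ?_⟩, fun s hs => subset_sUnion_of_mem hs⟩
      intro a ha b hb hne
      obtain ⟨s, hs, has⟩ := ha
      obtain ⟨s', hs', hbs'⟩ := hb
      rcases hchain.total hs hs' with h | h
      · exact (hc hs').2 (h has) hbs' hne
      · exact (hc hs).2 has (h hbs') hne
    obtain ⟨A, hA⟩ := zorn_subset {A : Set Γ | A ⊆ C ∧ A.PairwiseDisjoint bl} hzorn
    · refine ⟨A, hA.prop.1, hA.prop.2, ?_⟩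
      intro b hb hdisj
      have hmem : insert b A ∈ {A : Set Γ | A ⊆ C ∧ A.PairwiseDisjoint bl} := by
        refine ⟨insert_subset hb hA.prop.1, hA.prop.2.insert ?_⟩
        intro j hj _
        exact (hdisj j hj)
      exact hA.2 hmem (subset_insert b A) (mem_insert b A)
  choose pick pickC pickDisj pickMax using maxDisj
  set Cand : ℕ → Set Γ → Set Γ := fun m Sm =>
    {t' | Good (m + 1) t' ∧ ∃ t ∈ Sm, bl t' ⊆ bl t ∧ R m t t'} with hCand
  set S : ℕ → Set Γ := fun m => Nat.rec (pick {t | Good 0 t}) (fun m Sm => pick (Cand m Sm)) m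
    with hS
  have hS0 : S 0 = pick {t | Good 0 t} := rfl
  have hSsucc : ∀ m, S (m + 1) = pick (Cand m (S m)) := fun m => rfl
  set V : ℕ → Set Y := fun m => ⋃ t ∈ S m, bl t with hV
  have hVopen : ∀ m, IsOpen (V m) := fun m => isOpen_biUnion fun t _ => hopen t
  have hGoodS : ∀ m, ∀ t ∈ S m, Good m t := by
    intro m
    cases m with
    | zero => exact fun t ht => pickC _ ht
    | succ m => exact fun t ht => (pickC _ ht).1
  have hDisjS : ∀ m, (S m).PairwiseDisjoint bl := by
    intro m; cases m with
    | zero => exact pickDisj _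
    | succ m => exact pickDisj _
  have hVdense : ∀ m, Dense (V m) := by
    intro m
    induction m with
    | zero =>
      rw [Metric.dense_iff]
      intro p r hr
      obtain ⟨t, ht, hne, hsub⟩ := init p r hr
      by_contra hempty
      rw [Set.not_nonempty_iff_eq_empty] at hempty
      have hdisj : ∀ a ∈ S 0, Disjoint (bl t) (bl a) := by
        intro a ha
        rw [Set.disjoint_left]
        intro z hzt hza
        have : z ∈ Metric.ball p r ∩ V 0 := ⟨hsub hzt, Set.mem_biUnion ha hza⟩
        rw [hempty] at this
        exact this
      have htS : t ∈ S 0 := pickMax _ t ht hdisj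
      obtain ⟨z, hz⟩ := hne
      have : z ∈ Metric.ball p r ∩ V 0 := ⟨hsub hz, Set.mem_biUnion htS hz⟩
      rw [hempty] at this
      exact this
    | succ m ih =>
      rw [Metric.dense_iff]
      intro p r hr
      obtain ⟨q, hq⟩ := (Metric.dense_iff.1 ih) p (r / 2) (by linarith)
      obtain ⟨t, htS, hqt⟩ : ∃ t ∈ S m, q ∈ bl t := by
        have h2 := hq.2
        rw [hV] at h2
        simpa using h2
      obtain ⟨t', hGt', hne', hsub', hR'⟩ :=
        ext m t (hGoodS m t htS) q hqt (r / 2) (by linarith)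
      have ht'C : t' ∈ Cand m (S m) :=
        ⟨hGt', t, htS, hsub'.trans inter_subset_right, hR'⟩
      have hsubr : bl t' ⊆ Metric.ball p r := by
        refine (hsub'.trans inter_subset_left).trans ?_
        intro z hz
        rw [Metric.mem_ball] at *
        have hqp : dist q p < r / 2 := hq.1
        calc dist z p ≤ dist z q + dist q p := dist_triangle _ _ _
          _ < r / 2 + r / 2 := by exact add_lt_add hz hqp
          _ = r := by ring
      by_contra hempty
      rw [Set.not_nonempty_iff_eq_empty] at hempty
      have hdisj : ∀ a ∈ S (m + 1), Disjoint (bl t') (bl a) := by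
        intro a ha
        rw [Set.disjoint_left]
        intro z hzt hza
        have : z ∈ Metric.ball p r ∩ V (m + 1) := ⟨hsubr hzt, Set.mem_biUnion ha hza⟩
        rw [hempty] at this
        exact this
      have ht'S : t' ∈ S (m + 1) := by
        rw [hSsucc]
        exact pickMax _ t' ht'C hdisj
      obtain ⟨z, hz⟩ := hne'
      have : z ∈ Metric.ball p r ∩ V (m + 1) := ⟨hsubr hz, Set.mem_biUnion ht'S hz⟩
      rw [hempty] at this
      exact this
  refine ⟨⋂ m, V m, ?_, ?_⟩
  · exact (countable_iInter_mem).2 fun m => residual_of_dense_open (hVopen m) (hVdense m)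
  · intro x hx
    have hx' : ∀ m, ∃ t, t ∈ S m ∧ x ∈ bl t := by
      intro m
      have h2 := Set.mem_iInter.1 hx m
      rw [hV] at h2
      simpa using h2
    choose tt httS hxtt using hx'
    refine ⟨tt, fun m => hGoodS m _ (httS m), hxtt, ?_⟩
    intro m
    have hC : tt (m + 1) ∈ Cand m (S m) := pickC _ (by rw [← hSsucc m]; exact httS (m + 1))
    obtain ⟨_, t, htS, hsub, hR⟩ := hC
    have ht_eq : t = tt m := by
      by_contra hne
      exact Set.disjoint_left.1 (hDisjS m htS (httS m) hne) (hsub (hxtt (m + 1))) (hxtt m)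
    rw [← ht_eq]
    exact hR

/-- Suppose the Polish `G`-space `X` (with compatible metrics fixed on everything) is
approximated by the direct limit of the actions of Polish groups `Hₙ` on Polish spaces `Xₙ`,
via continuous homomorphisms `i n : Hₙ → Hₙ₊₁`, continuous injective equivariant maps
`f n : Xₙ → Xₙ₊₁`, continuous homomorphisms `iota n : Hₙ → G` with dense union of ranges, and
continuous equivariant maps `φ n : Xₙ → X` with dense union of ranges.  Let `y ∈ X₀` have
dense `Hₙ`-orbit in every `Xₙ` and let `J ∈ ℕ`.  If for every `ε > 0`, every `j ≥ J` and
every `g ∈ H_j` there are positive reals `α_{j+k}` (`k ∈ ℕ`) such that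
(1) for every `k`, the set of translates of `i_j^{j+k}(g) • f_0^{j+k}(y)` by elements `h` with
`dist(h,1) < mod(iota_{j+k}, 1, ε)` is dense in the ball of radius `α_{j+k}` around this point, and
(2) `inf_k comod(φ_{j+k}, i_j^{j+k}(g) • f_0^{j+k}(y), α_{j+k}) > 0`,
then the `G`-orbit of `φ₀(y)` is comeager in `X`. -/
theorem orbit_comeager_of_direct_limit_approx
    {G X : Type*} [Group G] [MetricSpace G] [IsTopologicalGroup G] [PolishSpace G]
    [MetricSpace X] [PolishSpace X] [MulAction G X] [ContinuousSMul G X]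
    (H : ℕ → Type*) (Xn : ℕ → Type*)
    [∀ n, Group (H n)] [∀ n, MetricSpace (H n)] [∀ n, IsTopologicalGroup (H n)]
    [∀ n, PolishSpace (H n)] [∀ n, MetricSpace (Xn n)] [∀ n, PolishSpace (Xn n)]
    [∀ n, MulAction (H n) (Xn n)] [∀ n, ContinuousSMul (H n) (Xn n)]
    (i : ∀ n, H n →* H (n + 1)) (hic : ∀ n, Continuous (i n))
    (f : ∀ n, Xn n → Xn (n + 1)) (hfc : ∀ n, Continuous (f n))
    (hfinj : ∀ n, Function.Injective (f n))
    (hfequiv : ∀ n (h : H n) (x : Xn n), f n (h • x) = i n h • f n x)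
    (iota : ∀ n, H n →* G) (hiotac : ∀ n, Continuous (iota n))
    (hiotacompat : ∀ n (h : H n), iota (n + 1) (i n h) = iota n h)
    (hiotadense : Dense (⋃ n, Set.range (iota n)))
    (φ : ∀ n, Xn n → X) (hφc : ∀ n, Continuous (φ n))
    (hφcompat : ∀ n (x : Xn n), φ (n + 1) (f n x) = φ n x)
    (hφequiv : ∀ n (h : H n) (x : Xn n), φ n (h • x) = iota n h • φ n x)
    (hφdense : Dense (⋃ n, Set.range (φ n)))
    (y : Xn 0) (hy : ∀ n, Dense (MulAction.orbit (H n) (f0Comp f n y)))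
    (J : ℕ)
    (hmain : ∀ ε : ℝ, 0 < ε → ∀ j : ℕ, J ≤ j → ∀ g : H j, ∃ α : ℕ → ℝ,
      (∀ k, 0 < α k) ∧
      (∀ k, Metric.ball (chainComp (fun n => ⇑(i n)) j k g • f0Comp f (j + k) y) (α k) ⊆
        closure ((fun h : H (j + k) =>
            h • (chainComp (fun n => ⇑(i n)) j k g • f0Comp f (j + k) y)) ''
          {h : H (j + k) | ∃ δ ∈ modSet (⇑(iota (j + k))) 1 ε, dist h 1 < δ})) ∧
      (∃ c : ℝ, 0 < c ∧ ∀ k, ∃ δ ∈ comodSet (φ (j + k))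
          (chainComp (fun n => ⇑(i n)) j k g • f0Comp f (j + k) y) (α k), c ≤ δ)) :
    MulAction.orbit G (φ 0 y) ∈ residual X := by
  classical
  set x₀ := φ 0 y with hx₀def
  have phi_f0 : ∀ n, φ n (f0Comp f n y) = x₀ := by
    intro n
    induction n with
    | zero => exact hx₀def.symm
    | succ n ih => exact (hφcompat n _).trans ih
  have iotaI : ∀ (j k : ℕ) (g : H j),
      iota (j + k) (chainComp (fun n => ⇑(i n)) j k g) = iota j g := by
    intro j k g
    induction k with
    | zero => rfl
    | succ k ih => exact (hiotacompat (j + k) _).trans ih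
  have phi_chain : ∀ (n k : ℕ) (u : Xn n), φ (n + k) (chainComp f n k u) = φ n u := by
    intro n k u
    induction k with
    | zero => rfl
    | succ k ih => exact (hφcompat (n + k) _).trans ih
  have phi_cast : ∀ {n m : ℕ} (e : n = m) (u : Xn n), φ m (e ▸ u) = φ n u := by
    intro n m e u; subst e; rfl
  have approx : ∀ (j : ℕ) (p : X) (β : ℝ), 0 < β →
      ∃ (k : ℕ) (u : Xn (j + k)), dist (φ (j + k) u) p < β := by
    intro j p β hβ
    obtain ⟨q, hq, hdq⟩ := Metric.mem_closure_iff.1 (hφdense p) β hβ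
    rw [Set.mem_iUnion] at hq
    obtain ⟨n, hn⟩ := hq
    obtain ⟨u₀, hu₀⟩ := hn
    refine ⟨n, (Nat.add_comm n j ▸ chainComp f n j u₀ : Xn (j + n)), ?_⟩
    rw [phi_cast (Nat.add_comm n j), phi_chain, hu₀, dist_comm]
    exact hdq
  -- complete metric on G
  have epsel : ∀ (γ : G) (m : ℕ), ∃ ε, 0 < ε ∧ ∀ u : G, dist u 1 < ε →
      @dist G (TopologicalSpace.completelyMetrizableMetric G).toPseudoMetricSpace.toDist (u * γ) γ < (2⁻¹ : ℝ) ^ m := by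
    intro γ m
    have hball : IsOpen (@Metric.ball G (TopologicalSpace.completelyMetrizableMetric G).toPseudoMetricSpace γ
        ((2⁻¹ : ℝ) ^ m)) :=
      @Metric.isOpen_ball G (TopologicalSpace.completelyMetrizableMetric G).toPseudoMetricSpace γ _
    have hpre : IsOpen ((fun u : G => u * γ) ⁻¹'
        (@Metric.ball G (TopologicalSpace.completelyMetrizableMetric G).toPseudoMetricSpace γ ((2⁻¹ : ℝ) ^ m))) :=
      hball.preimage (continuous_mul_right γ)
    have h1 : (1 : G) ∈ (fun u : G => u * γ) ⁻¹'
        (@Metric.ball G (TopologicalSpace.completelyMetrizableMetric G).toPseudoMetricSpace γ ((2⁻¹ : ℝ) ^ m)) := by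
      show @dist G (TopologicalSpace.completelyMetrizableMetric G).toPseudoMetricSpace.toDist ((1 : G) * γ) γ
        < (2⁻¹ : ℝ) ^ m
      rw [one_mul, @dist_self G (TopologicalSpace.completelyMetrizableMetric G).toPseudoMetricSpace]
      positivity
    obtain ⟨ε, hεpos, hεsub⟩ := Metric.isOpen_iff.1 hpre 1 h1
    refine ⟨ε, hεpos, fun u hu => ?_⟩
    exact hεsub (Metric.mem_ball.2 hu)
  choose εs εspos εsprop using epsel
  have Hm := fun (m : ℕ) (j : {j : ℕ // J ≤ j}) (g : H j.1) =>
    hmain (εs (iota j.1 g) m) (εspos _ _) j.1 j.2 g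
  choose α hαpos hαdense c hcpos hcomod using Hm
  have hInit : ∀ (p : X) (r : ℝ), 0 < r → ∃ nd : Σ j : ℕ, H j × ℝ,
      (∃ hJ : J ≤ nd.1,
        0 < nd.2.2 ∧ nd.2.2 ≤ (2⁻¹ : ℝ) ^ 0 ∧ nd.2.2 ≤ c 0 ⟨nd.1, hJ⟩ nd.2.1) ∧
      (Metric.ball (iota nd.1 nd.2.1 • x₀) nd.2.2).Nonempty ∧
      Metric.ball (iota nd.1 nd.2.1 • x₀) nd.2.2 ⊆ Metric.ball p r := by
    intro p r hr
    obtain ⟨k, u', hu'⟩ := approx J p (r / 4) (by linarith)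
    have hWopen : IsOpen (φ (J + k) ⁻¹' Metric.ball (φ (J + k) u') (r / 4)) :=
      Metric.isOpen_ball.preimage (hφc (J + k))
    have hWne : (φ (J + k) ⁻¹' Metric.ball (φ (J + k) u') (r / 4)).Nonempty := by
      refine ⟨u', ?_⟩
      simp only [Set.mem_preimage, Metric.mem_ball, dist_self]
      linarith
    obtain ⟨w, hworb, hwW⟩ := (hy (J + k)).exists_mem_open hWopen hWne
    obtain ⟨h, rfl⟩ := MulAction.mem_orbit_iff.1 hworb
    have hcen : φ (J + k) (h • f0Comp f (J + k) y) = iota (J + k) h • x₀ := by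
      rw [hφequiv, phi_f0]
    have hd : dist (iota (J + k) h • x₀) p < r / 2 := by
      have h1 : dist (φ (J + k) (h • f0Comp f (J + k) y)) (φ (J + k) u') < r / 4 := by
        simpa [Metric.mem_ball] using hwW
      rw [hcen] at h1
      calc dist (iota (J + k) h • x₀) p
          ≤ dist (iota (J + k) h • x₀) (φ (J + k) u') + dist (φ (J + k) u') p :=
            dist_triangle _ _ _
        _ < r / 4 + r / 4 := add_lt_add h1 hu'
        _ = r / 2 := by ring
    have hJ' : J ≤ J + k := Nat.le_add_right _ _
    refine ⟨⟨J + k, h, min (c 0 ⟨J + k, hJ'⟩ h)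
        (min 1 (r / 2 - dist (iota (J + k) h • x₀) p))⟩,
      ⟨hJ', ?_, ?_, ?_⟩, ?_, ?_⟩
    · exact lt_min (hcpos _ _ _) (lt_min one_pos (by linarith))
    · rw [pow_zero]
      exact le_trans (min_le_right _ _) (min_le_left _ _)
    · exact min_le_left _ _
    · exact ⟨_, Metric.mem_ball_self (lt_min (hcpos _ _ _) (lt_min one_pos (by linarith)))⟩
    · intro q hq
      rw [Metric.mem_ball] at hq ⊢
      have h2 : dist q (iota (J + k) h • x₀) < r / 2 - dist (iota (J + k) h • x₀) p :=
        lt_of_lt_of_le hq (le_trans (min_le_right _ _) (min_le_right _ _))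
      calc dist q p ≤ dist q (iota (J + k) h • x₀) + dist (iota (J + k) h • x₀) p :=
            dist_triangle _ _ _
        _ < r / 2 := by linarith
        _ ≤ r := by linarith
  have hExt : ∀ (m : ℕ) (nd : Σ j : ℕ, H j × ℝ),
      (∃ hJ : J ≤ nd.1,
        0 < nd.2.2 ∧ nd.2.2 ≤ (2⁻¹ : ℝ) ^ m ∧ nd.2.2 ≤ c m ⟨nd.1, hJ⟩ nd.2.1) →
      ∀ p ∈ Metric.ball (iota nd.1 nd.2.1 • x₀) nd.2.2, ∀ r : ℝ, 0 < r →
      ∃ nd' : Σ j : ℕ, H j × ℝ,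
        (∃ hJ : J ≤ nd'.1,
          0 < nd'.2.2 ∧ nd'.2.2 ≤ (2⁻¹ : ℝ) ^ (m + 1) ∧ nd'.2.2 ≤ c (m + 1) ⟨nd'.1, hJ⟩ nd'.2.1) ∧
        (Metric.ball (iota nd'.1 nd'.2.1 • x₀) nd'.2.2).Nonempty ∧
        Metric.ball (iota nd'.1 nd'.2.1 • x₀) nd'.2.2 ⊆
          Metric.ball p r ∩ Metric.ball (iota nd.1 nd.2.1 • x₀) nd.2.2 ∧
        @dist G (TopologicalSpace.completelyMetrizableMetric G).toPseudoMetricSpace.toDist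
          (iota nd'.1 nd'.2.1) (iota nd.1 nd.2.1) < (2⁻¹ : ℝ) ^ m := by
    rintro m ⟨j, g, ρ⟩ ⟨hJ, hρpos, hρ2, hρc⟩ p hp r hr
    have hpd : dist p (iota j g • x₀) < ρ := Metric.mem_ball.1 hp
    set r' := min r (ρ - dist p (iota j g • x₀)) with hr'def
    have hr' : 0 < r' := lt_min hr (by linarith)
    have hr'r : r' ≤ r := min_le_left _ _
    have hB' : Metric.ball p r' ⊆ Metric.ball (iota j g • x₀) ρ := by
      intro q hq
      rw [Metric.mem_ball] at hq ⊢
      have h2 : dist q p < ρ - dist p (iota j g • x₀) :=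
        lt_of_lt_of_le hq (min_le_right _ _)
      calc dist q (iota j g • x₀) ≤ dist q p + dist p (iota j g • x₀) := dist_triangle _ _ _
        _ < ρ := by linarith
    have hcc : 0 < c m ⟨j, hJ⟩ g := hcpos _ _ _
    set β := min (r' / 4) (c m ⟨j, hJ⟩ g - dist p (iota j g • x₀)) with hβdef
    have hβ : 0 < β := lt_min (by linarith) (by
      have : ρ ≤ c m ⟨j, hJ⟩ g := hρc
      linarith)
    obtain ⟨k, u', hu'⟩ := approx j p β hβ
    obtain ⟨δ, ⟨hδpos, hδsub⟩, hδc⟩ := hcomod m ⟨j, hJ⟩ g k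
    have hzc : φ (j + k) (chainComp (fun n => ⇑(i n)) j k g • f0Comp f (j + k) y)
        = iota j g • x₀ := by
      rw [hφequiv, phi_f0, iotaI]
    have hu'mem : φ (j + k) u' ∈ Metric.ball
        (φ (j + k) (chainComp (fun n => ⇑(i n)) j k g • f0Comp f (j + k) y)) δ
        ∩ Set.range (φ (j + k)) := by
      constructor
      · rw [hzc, Metric.mem_ball]
        have hβ2 : β ≤ c m ⟨j, hJ⟩ g - dist p (iota j g • x₀) := min_le_right _ _
        calc dist (φ (j + k) u') (iota j g • x₀)
            ≤ dist (φ (j + k) u') p + dist p (iota j g • x₀) := dist_triangle _ _ _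
          _ < β + dist p (iota j g • x₀) := by linarith
          _ ≤ c m ⟨j, hJ⟩ g := by linarith
          _ ≤ δ := hδc
      · exact Set.mem_range_self _
    obtain ⟨v, hvball, hvφ⟩ := hδsub hu'mem
    obtain ⟨ρ₀, hρ₀pos, hρ₀⟩ := Metric.continuous_iff.1 (hφc (j + k)) v (r' / 4) (by linarith)
    have hvcl := hαdense m ⟨j, hJ⟩ g k hvball
    rw [Metric.mem_closure_iff] at hvcl
    obtain ⟨w, hw, hdvw⟩ := hvcl ρ₀ hρ₀pos
    obtain ⟨h, hh, rfl⟩ := hw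
    obtain ⟨δ', ⟨hδ'pos, hδ'sub⟩, hhδ'⟩ := hh
    have hιh : dist (iota (j + k) h) 1 < εs (iota j g) m := by
      have h3 : iota (j + k) h ∈ Metric.ball (iota (j + k) 1) (εs (iota j g) m) :=
        hδ'sub ⟨h, Metric.mem_ball.2 hhδ', rfl⟩
      simpa [map_one] using h3
    have hφw : dist (φ (j + k) (h • (chainComp (fun n => ⇑(i n)) j k g • f0Comp f (j + k) y)))
        (φ (j + k) v) < r' / 4 := by
      refine hρ₀ _ ?_
      rw [dist_comm] at hdvw
      exact hdvw
    have hkc : φ (j + k) (h • (chainComp (fun n => ⇑(i n)) j k g • f0Comp f (j + k) y))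
        = (iota (j + k) h * iota j g) • x₀ := by
      rw [hφequiv, hzc, ← mul_smul]
    have hβ4 : β ≤ r' / 4 := min_le_left _ _
    have hγ'p : dist ((iota (j + k) h * iota j g) • x₀) p < r' / 2 := by
      rw [← hkc]
      calc dist (φ (j + k) (h • (chainComp (fun n => ⇑(i n)) j k g • f0Comp f (j + k) y))) p
          ≤ dist (φ (j + k) (h • (chainComp (fun n => ⇑(i n)) j k g • f0Comp f (j + k) y)))
              (φ (j + k) v) + dist (φ (j + k) v) p := dist_triangle _ _ _
        _ < r' / 4 + r' / 4 := by
            refine add_lt_add hφw ?_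
            rw [hvφ]
            exact lt_of_lt_of_le hu' hβ4
        _ = r' / 2 := by ring
    have hJ' : J ≤ j + k := hJ.trans (Nat.le_add_right _ _)
    have hg'ι : iota (j + k) (h * chainComp (fun n => ⇑(i n)) j k g)
        = iota (j + k) h * iota j g := by
      rw [map_mul, iotaI]
    refine ⟨⟨j + k, h * chainComp (fun n => ⇑(i n)) j k g,
        min (c (m + 1) ⟨j + k, hJ'⟩ (h * chainComp (fun n => ⇑(i n)) j k g))
          (min ((2⁻¹ : ℝ) ^ (m + 1)) (r' / 2 - dist ((iota (j + k) h * iota j g) • x₀) p))⟩,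
      ⟨hJ', ?_, ?_, ?_⟩, ?_, ?_, ?_⟩
    · exact lt_min (hcpos _ _ _) (lt_min (by positivity) (by linarith))
    · exact le_trans (min_le_right _ _) (min_le_left _ _)
    · exact min_le_left _ _
    · exact ⟨_, Metric.mem_ball_self (lt_min (hcpos _ _ _) (lt_min (by positivity) (by linarith)))⟩
    · intro q hq
      have hq1 := Metric.mem_ball.1 hq
      rw [hg'ι] at hq1
      have h2 : dist q ((iota (j + k) h * iota j g) • x₀)
          < r' / 2 - dist ((iota (j + k) h * iota j g) • x₀) p :=
        lt_of_lt_of_le hq1 (le_trans (min_le_right _ _) (min_le_right _ _))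
      have hqp : dist q p < r' := by
        calc dist q p ≤ dist q ((iota (j + k) h * iota j g) • x₀)
              + dist ((iota (j + k) h * iota j g) • x₀) p := dist_triangle _ _ _
          _ < r' / 2 := by linarith
          _ ≤ r' := by linarith
      exact ⟨Metric.mem_ball.2 (lt_of_lt_of_le hqp hr'r), hB' (Metric.mem_ball.2 hqp)⟩
    · show @dist G (TopologicalSpace.completelyMetrizableMetric G).toPseudoMetricSpace.toDist
          (iota (j + k) (h * chainComp (fun n => ⇑(i n)) j k g)) (iota j g) < (2⁻¹ : ℝ) ^ m
      rw [hg'ι]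
      exact εsprop (iota j g) m _ hιh
  obtain ⟨E, hEres, hEchain⟩ := exists_residual_chain'
    (Γ := Σ j : ℕ, H j × ℝ)
    (fun nd => Metric.ball (iota nd.1 nd.2.1 • x₀) nd.2.2)
    (fun nd => Metric.isOpen_ball)
    (fun m nd => ∃ hJ : J ≤ nd.1,
      0 < nd.2.2 ∧ nd.2.2 ≤ (2⁻¹ : ℝ) ^ m ∧ nd.2.2 ≤ c m ⟨nd.1, hJ⟩ nd.2.1)
    (fun m nd nd' => @dist G (TopologicalSpace.completelyMetrizableMetric G).toPseudoMetricSpace.toDist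
        (iota nd'.1 nd'.2.1) (iota nd.1 nd.2.1) < (2⁻¹ : ℝ) ^ m)
    hInit hExt
  -- conclusion
  refine Filter.mem_of_superset hEres ?_
  intro x hx
  obtain ⟨tt, hGoodt, hxt, hRt⟩ := hEchain x hx
  have hCauchy : @CauchySeq G ℕ (TopologicalSpace.completelyMetrizableMetric G).toUniformSpace _
      (fun m => iota (tt m).1 (tt m).2.1) := by
    refine @cauchySeq_of_le_geometric G (TopologicalSpace.completelyMetrizableMetric G).toPseudoMetricSpace 2⁻¹ 1
      _ (by norm_num) ?_
    intro n
    have h1 := hRt n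
    rw [@dist_comm G (TopologicalSpace.completelyMetrizableMetric G).toPseudoMetricSpace, one_mul]
    exact le_of_lt h1
  obtain ⟨γlim, hγlim⟩ := @cauchySeq_tendsto_of_complete G ℕ
    (TopologicalSpace.completelyMetrizableMetric G).toUniformSpace _ (TopologicalSpace.complete_completelyMetrizableMetric G) _ hCauchy
  have hγ' : Filter.Tendsto (fun m => iota (tt m).1 (tt m).2.1) Filter.atTop (nhds γlim) :=
    hγlim
  have hsmul : Filter.Tendsto (fun m => iota (tt m).1 (tt m).2.1 • x₀) Filter.atTop
      (nhds (γlim • x₀)) := hγ'.smul tendsto_const_nhds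
  have hxlim : Filter.Tendsto (fun m => iota (tt m).1 (tt m).2.1 • x₀) Filter.atTop (nhds x) := by
    rw [tendsto_iff_dist_tendsto_zero]
    refine squeeze_zero (fun m => dist_nonneg) (fun m => ?_)
      (tendsto_pow_atTop_nhds_zero_of_lt_one (r := (2⁻¹ : ℝ)) (by norm_num) (by norm_num))
    obtain ⟨hJ, hρpos, hρ2, _⟩ := hGoodt m
    have h2 := Metric.mem_ball.1 (hxt m)
    rw [dist_comm]
    exact le_of_lt (lt_of_lt_of_le h2 hρ2)
  have hxe : x = γlim • x₀ := tendsto_nhds_unique hxlim hsmul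
  rw [hxe]
  exact MulAction.mem_orbit x₀ γlim

end
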